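/- Let G be a finite p-group acted on by a group A, and suppose G is d-maximal for A-subgroups. Then every factor γ_n(G)/γ_{n+1}(G) of the lower central series of G is elementary abelian. -/

import Mathlib

def AInv (A : Type*) {G : Type*} [Group A] [Group G] [MulDistribMulAction A G]
    (H : Subgroup G) : Prop :=
  ∀ (a : A) (g : G), g ∈ H → a • g ∈ H

/-- `G` is `d`-maximal for `A`-subgroups: every proper `A`-invariant subgroup
has strictly smaller minimal number of generators. -/
def DMax (A G : Type*) [Group A] [Group G] [Finite G] [MulDistribMulAction A G] : Prop :=
  ∀ H : Subgroup G, AInv A H → H ≠ ⊤ → Group.rank H < Group.rank G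

open scoped commutatorElement

section AuxLemmas

open Subgroup

lemma coatom_le_aux {p : ℕ} {G : Type*} [Group G] [Finite G] (hp : p.Prime) (hG : IsPGroup p G)
    {M : Subgroup G} (hM : IsCoatom M) :
    (∀ x y : G, ⁅x, y⁆ ∈ M) ∧ ∀ x : G, x ^ p ∈ M := by
  haveI : Fact p.Prime := ⟨hp⟩
  haveI : Group.IsNilpotent G := hG.isNilpotent
  haveI hMn : M.Normal :=
    NormalizerCondition.normal_of_coatom M normalizerCondition_of_isNilpotent hM
  set π := QuotientGroup.mk' M with hπ
  have hsur : Function.Surjective π := QuotientGroup.mk'_surjective M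
  have hQp : IsPGroup p (G ⧸ M) := hG.of_surjective π hsur
  have htriv : ∀ K : Subgroup (G ⧸ M), K = ⊥ ∨ K = ⊤ := by
    intro K
    have hker : M ≤ comap π K := fun x hx => by
      have h1 : π x = 1 := (QuotientGroup.eq_one_iff x).mpr hx
      rw [Subgroup.mem_comap, h1]
      exact K.one_mem
    rcases eq_or_lt_of_le hker with h | h
    · left
      have := map_comap_eq_self_of_surjective (f := π) hsur (H := K)
      rw [← this, ← h]
      rw [eq_bot_iff]
      rintro y ⟨x, hx, rfl⟩
      show π x ∈ (⊥ : Subgroup (G ⧸ M)); rw [Subgroup.mem_bot]; exact (QuotientGroup.eq_one_iff x).mpr hx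
    · right
      have : comap π K = ⊤ := hM.2 _ h
      have := map_comap_eq_self_of_surjective (f := π) hsur (H := K)
      rw [← this, ‹comap π K = ⊤›, ← top_le_iff]
      intro y _
      obtain ⟨x, rfl⟩ := hsur y
      exact ⟨x, trivial, rfl⟩
  have hexp : ∀ q : G ⧸ M, q ^ p = 1 := by
    intro q
    by_cases hq : q = 1
    · simp [hq]
    by_cases hz : q ^ p = 1
    · exact hz
    exfalso
    have hzt : Subgroup.zpowers (q ^ p) = ⊤ :=
      (htriv _).resolve_left (by simpa [Subgroup.zpowers_eq_bot] using hz)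
    have hqmem : q ∈ Subgroup.zpowers (q ^ p) := hzt ▸ Subgroup.mem_top q
    obtain ⟨j, hj⟩ := hqmem
    -- q^p ^ j = q
    have hj' : (q ^ p) ^ j = q := hj
    have h1 : q ^ ((p : ℤ) * j - 1) = 1 := by
      rw [sub_eq_add_neg, zpow_add, zpow_neg, zpow_one, zpow_mul, zpow_natCast, hj']
      group
    have hdvd : (orderOf q : ℤ) ∣ (p : ℤ) * j - 1 := orderOf_dvd_iff_zpow_eq_one.mpr h1
    obtain ⟨k, hk⟩ := hQp q
    have hordvd : orderOf q ∣ p ^ k := orderOf_dvd_of_pow_eq_one hk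
    have hpord : p ∣ orderOf q := by
      obtain ⟨m, hm, heq⟩ := (Nat.dvd_prime_pow hp).mp hordvd
      have hm0 : m ≠ 0 := by
        rintro rfl
        rw [pow_zero] at heq
        exact hq (orderOf_eq_one_iff.mp heq)
      rw [heq]
      exact dvd_pow_self p hm0
    have : (p : ℤ) ∣ 1 := by
      have h2 : (p : ℤ) ∣ (p : ℤ) * j - 1 := dvd_trans (Int.natCast_dvd_natCast.mpr hpord) hdvd
      have h3 : (p : ℤ) ∣ (p : ℤ) * j := dvd_mul_right _ _
      have := dvd_sub h3 h2
      simpa using this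
    have := Int.le_of_dvd one_pos this
    have := hp.two_le
    omega
  have hcomm : ∀ a b : G ⧸ M, a * b = b * a := by
    intro a b
    by_cases ha : a = 1
    · simp [ha]
    have hzt : Subgroup.zpowers a = ⊤ :=
      (htriv _).resolve_left (by simpa [Subgroup.zpowers_eq_bot] using ha)
    have : b ∈ Subgroup.zpowers a := hzt ▸ Subgroup.mem_top b
    obtain ⟨j, hj⟩ := this
    have hj' : a ^ j = b := hj
    rw [← hj']
    exact ((Commute.refl a).zpow_right j).eq
  constructor
  · intro x y
    have : π ⁅x, y⁆ = 1 := by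
      rw [map_commutatorElement]
      rw [commutatorElement_eq_one_iff_commute]
      exact hcomm _ _
    exact (QuotientGroup.eq_one_iff _).mp this
  · intro x
    have : π (x ^ p) = 1 := by
      rw [map_pow]; exact hexp _
    exact (QuotientGroup.eq_one_iff _).mp this

lemma burnside_aux {p : ℕ} {G : Type*} [Group G] [Finite G] (hp : p.Prime) (hG : IsPGroup p G)
    {Q : Type*} [Group Q] [Finite Q] (ψ : G →* Q) (hsur : Function.Surjective ψ)
    (hker : ∀ x : G, x ∈ ψ.ker →
      x ∈ commutator G ⊔ Subgroup.closure (Set.range fun g : G => g ^ p)) :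
    Group.rank G ≤ Group.rank Q := by
  classical
  haveI : Finite Q := Finite.of_surjective ψ hsur
  haveI : Finite (Subgroup G) :=
    Finite.of_injective (fun H => (H : Set G)) SetLike.coe_injective
  obtain ⟨S, hcard, hgen⟩ := Group.rank_spec Q
  choose l hl using hsur
  have hT : Subgroup.closure ((S.image l : Finset G) : Set G) = ⊤ := by
    by_contra hC
    set C := Subgroup.closure ((S.image l : Finset G) : Set G) with hCdef
    have hmap : Subgroup.map ψ C = ⊤ := by
      rw [hCdef, MonoidHom.map_closure]
      rw [← top_le_iff, ← hgen]
      apply Subgroup.closure_mono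
      intro q hq
      refine ⟨l q, ?_, hl q⟩
      simp only [Finset.coe_image]
      exact Set.mem_image_of_mem l hq
    have hsup : C ⊔ ψ.ker = ⊤ := by
      have h1 := Subgroup.comap_map_eq ψ C
      rw [hmap, Subgroup.comap_top] at h1
      exact h1.symm
    obtain ⟨M, hM, hCM⟩ := (eq_top_or_exists_le_coatom C).resolve_left hC
    obtain ⟨hMc, hMp⟩ := coatom_le_aux hp hG hM
    have hKM : ψ.ker ≤ M := by
      have hsle : commutator G ⊔ Subgroup.closure (Set.range fun g : G => g ^ p) ≤ M := by
        apply sup_le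
        · rw [commutator_def, Subgroup.commutator_le]
          intro g _ h _
          exact hMc g h
        · rw [Subgroup.closure_le]
          rintro _ ⟨g, rfl⟩
          exact hMp g
      intro x hx
      exact hsle (hker x hx)
    exact hM.1 (top_le_iff.mp (hsup ▸ sup_le hCM hKM))
  calc Group.rank G ≤ (S.image l).card := Group.rank_le hT
    _ ≤ S.card := Finset.card_image_le
    _ = Group.rank Q := hcard

lemma zpowers_normal_of_comm {W : Type*} [Group W] (hc : ∀ a b : W, a * b = b * a) (s : W) :
    (Subgroup.zpowers s).Normal := by
  constructor
  intro n hn g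
  rw [hc g n, mul_assoc, mul_inv_cancel, mul_one]
  exact hn

universe u

lemma card_le_pow_rank_aux {p : ℕ} (hp : p.Prime) :
    ∀ (n : ℕ) (W : Type u) [Group W] [Finite W],
    (∀ a b : W, a * b = b * a) → (∀ a : W, a ^ p = 1) →
    ∀ S : Finset W, S.card ≤ n → Subgroup.closure (S : Set W) = ⊤ → Nat.card W ≤ p ^ n := by
  classical
  intro n
  induction n with
  | zero =>
    intro W _ _ hc he S hS hgen
    rw [Nat.le_zero, Finset.card_eq_zero] at hS
    subst hS
    simp only [Finset.coe_empty, Subgroup.closure_empty] at hgen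
    have : Subsingleton W := by
      constructor
      intro a b
      have ha : a ∈ (⊥ : Subgroup W) := hgen ▸ Subgroup.mem_top a
      have hb : b ∈ (⊥ : Subgroup W) := hgen ▸ Subgroup.mem_top b
      rw [Subgroup.mem_bot] at ha hb
      rw [ha, hb]
    simp only [pow_zero]
    exact le_of_eq (Nat.card_eq_one_iff_unique.mpr ⟨this, ⟨1⟩⟩)
  | succ n ih =>
    intro W _ _ hc he S hS hgen
    rcases S.eq_empty_or_nonempty with rfl | ⟨s, hs⟩
    · have h0 := ih W hc he ∅ (Nat.zero_le n) (by simpa using hgen)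
      calc Nat.card W ≤ p ^ n := h0
        _ ≤ p ^ (n + 1) := Nat.pow_le_pow_right hp.pos (Nat.le_succ n)
    · set Z := Subgroup.zpowers s with hZ
      haveI : Z.Normal := zpowers_normal_of_comm hc s
      set π := QuotientGroup.mk' Z with hπ
      have hsur : Function.Surjective π := QuotientGroup.mk'_surjective Z
      have hc' : ∀ a b : W ⧸ Z, a * b = b * a := by
        intro a b
        obtain ⟨a, rfl⟩ := hsur a
        obtain ⟨b, rfl⟩ := hsur b
        rw [← map_mul, ← map_mul, hc]
      have he' : ∀ a : W ⧸ Z, a ^ p = 1 := by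
        intro a
        obtain ⟨a, rfl⟩ := hsur a
        rw [← map_pow, he, map_one]
      set S' : Finset (W ⧸ Z) := (S.erase s).image π with hS'
      have hgen' : Subgroup.closure (S' : Set (W ⧸ Z)) = ⊤ := by
        have h1 : Subgroup.closure (π '' (S : Set W)) = ⊤ := by
          rw [← MonoidHom.map_closure, hgen, Subgroup.map_top_of_surjective π hsur]
        have h2 : (π '' (S : Set W)) ⊆ insert 1 (S' : Set (W ⧸ Z)) := by
          rintro _ ⟨x, hx, rfl⟩
          by_cases hxs : x = s
          · left
            rw [hxs]
            exact (QuotientGroup.eq_one_iff s).mpr (Subgroup.mem_zpowers s)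
          · right
            rw [hS']
            simp only [Finset.coe_image]
            exact Set.mem_image_of_mem π (by simp [Finset.mem_erase, hxs, hx])
        rw [← top_le_iff, ← h1]
        apply le_trans (Subgroup.closure_mono h2)
        rw [Set.insert_eq, Subgroup.closure_union, Subgroup.closure_singleton_one, bot_sup_eq]
      have hcard' : S'.card ≤ n := by
        calc S'.card ≤ (S.erase s).card := Finset.card_image_le
          _ ≤ S.card - 1 := le_of_eq (Finset.card_erase_of_mem hs)
          _ ≤ n := by omega
      have hq := ih (W ⧸ Z) hc' he' S' hcard' hgen'
      have hcZ : Nat.card Z ≤ p := by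
        rw [Nat.card_zpowers]
        exact Nat.le_of_dvd hp.pos (orderOf_dvd_of_pow_eq_one (he s))
      calc Nat.card W = Nat.card (W ⧸ Z) * Nat.card Z :=
            Subgroup.card_eq_card_quotient_mul_card_subgroup Z
        _ ≤ p ^ n * p := Nat.mul_le_mul hq hcZ
        _ = p ^ (n + 1) := (pow_succ p n).symm

lemma pow_rank_le_card_aux {p : ℕ} (hp : p.Prime) :
    ∀ (n : ℕ) (W : Type u) [Group W] [Finite W],
    Nat.card W ≤ n → (∀ a b : W, a * b = b * a) → (∀ a : W, a ^ p = 1) →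
    p ^ Group.rank W ≤ Nat.card W := by
  classical
  intro n
  induction n with
  | zero =>
    intro W _ _ hcard _ _
    have := Nat.card_pos (α := W)
    omega
  | succ n ih =>
    intro W _ _ hcard hc he
    by_cases htriv : ∀ w : W, w = 1
    · have hrank : Group.rank W = 0 := by
        have h0 : Subgroup.closure ((∅ : Finset W) : Set W) = ⊤ := by
          rw [Finset.coe_empty, Subgroup.closure_empty, eq_top_iff]
          intro w _
          rw [htriv w]
          exact Subgroup.one_mem ⊥
        have := Group.rank_le h0
        simpa using this
      rw [hrank, pow_zero]
      exact Nat.card_pos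
    · push_neg at htriv
      obtain ⟨x, hx⟩ := htriv
      set Z := Subgroup.zpowers x with hZdef
      haveI : Z.Normal := zpowers_normal_of_comm hc x
      set π := QuotientGroup.mk' Z with hπ
      have hsur : Function.Surjective π := QuotientGroup.mk'_surjective Z
      have hcZ : Nat.card Z = p := by
        rw [Nat.card_zpowers]
        haveI : Fact p.Prime := ⟨hp⟩
        exact orderOf_eq_prime (he x) hx
      have hcardeq : Nat.card W = Nat.card (W ⧸ Z) * p :=
        hcZ ▸ Subgroup.card_eq_card_quotient_mul_card_subgroup Z
      have hq1 : 1 ≤ Nat.card (W ⧸ Z) := Nat.card_pos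
      have hcard' : Nat.card (W ⧸ Z) ≤ n := by
        have h2 : 2 ≤ p := hp.two_le
        nlinarith
      have hc' : ∀ a b : W ⧸ Z, a * b = b * a := by
        intro a b
        obtain ⟨a, rfl⟩ := hsur a
        obtain ⟨b, rfl⟩ := hsur b
        rw [← map_mul, ← map_mul, hc]
      have he' : ∀ a : W ⧸ Z, a ^ p = 1 := by
        intro a
        obtain ⟨a, rfl⟩ := hsur a
        rw [← map_pow, he, map_one]
      have ihq := ih (W ⧸ Z) hcard' hc' he'
      -- rank W ≤ rank (W ⧸ Z) + 1
      obtain ⟨S', hcardS', hgenS'⟩ := Group.rank_spec (W ⧸ Z)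
      choose l hl using hsur
      have hgenT : Subgroup.closure ((insert x (S'.image l) : Finset W) : Set W) = ⊤ := by
        set C := Subgroup.closure ((insert x (S'.image l) : Finset W) : Set W) with hC
        have hxC : x ∈ C := Subgroup.subset_closure (by simp)
        have hmap : Subgroup.map π C = ⊤ := by
          rw [hC, MonoidHom.map_closure, ← top_le_iff, ← hgenS']
          apply Subgroup.closure_mono
          intro q hq
          refine ⟨l q, ?_, hl q⟩
          simp only [Finset.coe_insert, Finset.coe_image]
          right
          exact Set.mem_image_of_mem l hq
        have hsup : C ⊔ π.ker = ⊤ := by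
          have h1 := Subgroup.comap_map_eq π C
          rw [hmap, Subgroup.comap_top] at h1
          exact h1.symm
        have hker : π.ker ≤ C := by
          rw [hπ, QuotientGroup.ker_mk']
          rintro _ ⟨j, rfl⟩
          exact Subgroup.zpow_mem C hxC j
        rw [← hsup, sup_eq_left.mpr hker]
      have hrank : Group.rank W ≤ Group.rank (W ⧸ Z) + 1 := by
        calc Group.rank W ≤ (insert x (S'.image l) : Finset W).card := Group.rank_le hgenT
          _ ≤ (S'.image l).card + 1 := Finset.card_insert_le _ _
          _ ≤ S'.card + 1 := by
              have := Finset.card_image_le (f := l) (s := S')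
              omega
          _ = Group.rank (W ⧸ Z) + 1 := by rw [hcardS']
      calc p ^ Group.rank W ≤ p ^ (Group.rank (W ⧸ Z) + 1) :=
            Nat.pow_le_pow_right hp.pos hrank
        _ = p ^ Group.rank (W ⧸ Z) * p := pow_succ p _
        _ ≤ Nat.card (W ⧸ Z) * p := Nat.mul_le_mul_right p ihq
        _ = Nat.card W := hcardeq.symm

lemma smul_mem_commutator {A G : Type*} [Group A] [Group G] [MulDistribMulAction A G]
    (a : A) {c : G} (hc : c ∈ commutator G) : a • c ∈ commutator G := by
  rw [commutator_eq_closure] at hc ⊢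
  induction hc using Subgroup.closure_induction with
  | mem x hx =>
    obtain ⟨g, h, rfl⟩ := hx
    apply Subgroup.subset_closure
    refine ⟨a • g, a • h, ?_⟩
    simp only [commutatorElement_def, smul_mul', smul_inv']
  | one => rw [smul_one]; exact Subgroup.one_mem _
  | mul x y _ _ hx hy => rw [smul_mul']; exact Subgroup.mul_mem _ hx hy
  | inv x _ hx => rw [smul_inv']; exact Subgroup.inv_mem _ hx

lemma base_case {p : ℕ} (hp : p.Prime) {A G : Type*} [Group A] [Group G] [Finite G]
    [MulDistribMulAction A G] (hG : IsPGroup p G) (hmax : DMax A G) :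
    ∀ x : G, x ^ p ∈ commutator G := by
  classical
  set Ab := Abelianization G with hAbdef
  set of : G →* Ab := Abelianization.of with hofdef
  have hofsur : Function.Surjective of := fun x => Quotient.inductionOn' x fun g => ⟨g, rfl⟩
  have hker_of : ∀ x : G, of x = 1 ↔ x ∈ commutator G := fun x =>
    QuotientGroup.eq_one_iff x
  by_contra hcon
  push_neg at hcon
  obtain ⟨x₀, hx₀⟩ := hcon
  have hx₀' : (of x₀) ^ p ≠ 1 := by
    rw [← map_pow]
    exact fun h => hx₀ ((hker_of _).mp h)
  set P : Subgroup Ab := (powMonoidHom p : Ab →* Ab).range with hPdef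
  set R : Subgroup Ab := (powMonoidHom (p * p) : Ab →* Ab).range with hRdef
  set φ : G →* Ab := (powMonoidHom p : Ab →* Ab).comp of with hφdef
  set H : Subgroup G := R.comap φ with hHdef
  set N : Subgroup G := R.comap of with hNdef
  have hφ_apply : ∀ x : G, φ x = (of x) ^ p := fun x => rfl
  have hRP : R ≤ P := by
    rintro _ ⟨t, rfl⟩
    exact ⟨t ^ p, by rw [powMonoidHom_apply, powMonoidHom_apply, ← pow_mul]⟩
  -- A-invariance of H
  have hinv : AInv A H := by
    intro a g hg
    obtain ⟨y, hy⟩ := hg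
    obtain ⟨z, rfl⟩ := hofsur y
    rw [powMonoidHom_apply] at hy
    -- hy : of z ^ (p*p) = φ g = of g ^ p
    have hc : g ^ p * (z ^ (p * p))⁻¹ ∈ commutator G := by
      rw [← hker_of]
      rw [map_mul, map_inv, map_pow, map_pow, hy, hφ_apply]
      simp
    have hc2 := smul_mem_commutator a hc
    rw [smul_mul', smul_inv', smul_pow', smul_pow'] at hc2
    rw [← hker_of, map_mul, map_inv, map_pow, map_pow] at hc2
    have : of (a • g) ^ p = of (a • z) ^ (p * p) := mul_inv_eq_one.mp hc2
    exact ⟨of (a • z), by rw [powMonoidHom_apply, hφ_apply, this]⟩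
  -- H is proper
  have hne : H ≠ ⊤ := by
    intro htop
    -- p-power map on P is surjective
    set σ : P → P := fun w => ⟨w.1 ^ p, pow_mem w.2 p⟩ with hσdef
    have hσsur : Function.Surjective σ := by
      rintro ⟨w, ⟨u, hu⟩⟩
      obtain ⟨g, rfl⟩ := hofsur u
      have hgH : g ∈ H := htop ▸ Subgroup.mem_top g
      obtain ⟨t, ht⟩ := hgH
      rw [powMonoidHom_apply] at ht hu
      refine ⟨⟨t ^ p, ⟨t, rfl⟩⟩, ?_⟩
      apply Subtype.ext
      show (t ^ p) ^ p = w
      rw [← pow_mul, ht, hφ_apply, hu]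
    have hσinj : Function.Injective σ := (Finite.injective_iff_surjective).mpr hσsur
    -- find an element of order p in P
    have hw₀ : (of x₀) ^ p ∈ P := ⟨of x₀, rfl⟩
    obtain ⟨k, hk⟩ := (hG.of_surjective of hofsur) ((of x₀) ^ p)
    have : ∀ (k : ℕ) (w : Ab), w ∈ P → w ≠ 1 → w ^ p ^ k = 1 → False := by
      intro k
      induction k with
      | zero => intro w _ hw h1; rw [pow_zero, pow_one] at h1; exact hw h1
      | succ k ih =>
        intro w hwP hw h1
        by_cases hwp : w ^ p = 1
        · have : σ ⟨w, hwP⟩ = σ ⟨1, Subgroup.one_mem P⟩ := by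
            apply Subtype.ext
            show w ^ p = 1 ^ p
            rw [hwp, one_pow]
          exact hw (Subtype.ext_iff.mp (hσinj this))
        · exact ih (w ^ p) (pow_mem hwP p) hwp
            (by rw [← pow_mul, ← pow_succ']; exact h1)
    exact this k _ hw₀ hx₀' hk
  -- rank comparison
  have hlt := hmax H hinv hne
  have hNH : N ≤ H := by
    rintro g ⟨t, ht⟩
    rw [powMonoidHom_apply] at ht
    exact ⟨t ^ p, by rw [powMonoidHom_apply, hφ_apply, ← ht, ← pow_mul, ← pow_mul, mul_comm]⟩
  have hcommN : commutator G ≤ N := by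
    intro c hc
    show of c ∈ R
    rw [(hker_of c).mpr hc]
    exact R.one_mem
  haveI : N.Normal := Subgroup.Normal.comap inferInstance of
  haveI hNsub : (N.subgroupOf H).Normal := by
    constructor
    intro n hn g
    rw [Subgroup.mem_subgroupOf] at hn ⊢
    push_cast
    exact (‹N.Normal›).conj_mem _ hn _
  set W1 := Ab ⧸ P with hW1
  set W2 := H ⧸ (N.subgroupOf H) with hW2
  -- rank G ≤ rank W1 (Burnside basis argument)
  have hstep1 : Group.rank G ≤ Group.rank W1 := by
    apply burnside_aux hp hG ((QuotientGroup.mk' P).comp of)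
      ((QuotientGroup.mk'_surjective P).comp hofsur)
    intro x hx
    rw [MonoidHom.mem_ker, MonoidHom.comp_apply] at hx
    have hxP : of x ∈ P := (QuotientGroup.eq_one_iff (of x)).mp hx
    obtain ⟨u, hu⟩ := hxP
    obtain ⟨z, rfl⟩ := hofsur u
    rw [powMonoidHom_apply] at hu
    have hc : x * (z ^ p)⁻¹ ∈ commutator G := by
      rw [← hker_of, map_mul, map_inv, map_pow, hu]
      simp
    have : x = (x * (z ^ p)⁻¹) * z ^ p := by group
    rw [this]
    exact Subgroup.mul_mem _
      (Subgroup.mem_sup_left hc)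
      (Subgroup.mem_sup_right (Subgroup.subset_closure ⟨z, rfl⟩))
  -- cardinalities of W1 and W2 agree
  have hcardeq : Nat.card W1 = Nat.card W2 := by
    have hW1card : Nat.card W1 = P.index := rfl
    have hW2card : Nat.card W2 = N.relIndex H := rfl
    rw [hW1card, hW2card]
    have h1 : N.relIndex H * H.index = N.index := Subgroup.relIndex_mul_index hNH
    have h2 : R.relIndex P * P.index = R.index := Subgroup.relIndex_mul_index hRP
    have h3 : N.index = R.index := R.index_comap_of_surjective hofsur
    have h4 : H.index = R.relIndex P := by
      rw [hHdef, Subgroup.index_comap]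
      congr 1
      rw [hφdef, MonoidHom.range_comp, MonoidHom.range_eq_top.mpr hofsur]
      rw [← MonoidHom.range_eq_map]
    have hHpos : H.index ≠ 0 := Subgroup.index_ne_zero_of_finite
    have : N.relIndex H * H.index = H.index * P.index := by
      rw [h1, h3, ← h2, ← h4]
    apply Nat.eq_of_mul_eq_mul_right (Nat.pos_of_ne_zero hHpos)
    rw [this, mul_comm]
  -- W1 : comm, exponent p
  have hW1comm : ∀ a b : W1, a * b = b * a := fun a b => mul_comm a b
  have hW1exp : ∀ a : W1, a ^ p = 1 := by
    intro a
    obtain ⟨u, rfl⟩ := QuotientGroup.mk'_surjective P a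
    rw [← map_pow]
    exact (QuotientGroup.eq_one_iff _).mpr ⟨u, rfl⟩
  -- W2 : comm, exponent p
  have hW2comm : ∀ a b : W2, a * b = b * a := by
    intro a b
    obtain ⟨a, rfl⟩ := QuotientGroup.mk'_surjective _ a
    obtain ⟨b, rfl⟩ := QuotientGroup.mk'_surjective _ b
    rw [← map_mul, ← map_mul]
    show QuotientGroup.mk (a * b) = QuotientGroup.mk (b * a)
    apply (QuotientGroup.eq (s := N.subgroupOf H)).mpr
    rw [Subgroup.mem_subgroupOf]
    apply hcommN
    have : (((a * b)⁻¹ * (b * a) : H) : G) = ⁅(b : G)⁻¹, (a : G)⁻¹⁆ := by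
      push_cast
      rw [commutatorElement_def]
      group
    rw [this]
    exact Subgroup.commutator_mem_commutator (Subgroup.mem_top _) (Subgroup.mem_top _)
  have hW2exp : ∀ a : W2, a ^ p = 1 := by
    intro a
    obtain ⟨a, rfl⟩ := QuotientGroup.mk'_surjective _ a
    rw [← map_pow]
    apply (QuotientGroup.eq_one_iff _).mpr
    rw [Subgroup.mem_subgroupOf]
    show ((a : G) ^ p : G) ∈ N
    obtain ⟨t, ht⟩ := a.2
    rw [powMonoidHom_apply] at ht
    refine ⟨t, ?_⟩
    rw [powMonoidHom_apply, map_pow, ht, hφ_apply]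
  -- rank W1 ≤ rank W2
  have hstep2 : Group.rank W1 ≤ Group.rank W2 := by
    have h1 : p ^ Group.rank W1 ≤ Nat.card W1 :=
      pow_rank_le_card_aux hp (Nat.card W1) W1 le_rfl hW1comm hW1exp
    have h2 : Nat.card W2 ≤ p ^ Group.rank W2 := by
      obtain ⟨S, hScard, hSgen⟩ := Group.rank_spec W2
      exact card_le_pow_rank_aux hp (Group.rank W2) W2 hW2comm hW2exp S (le_of_eq hScard) hSgen
    have : p ^ Group.rank W1 ≤ p ^ Group.rank W2 := by
      calc p ^ Group.rank W1 ≤ Nat.card W1 := h1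
        _ = Nat.card W2 := hcardeq
        _ ≤ p ^ Group.rank W2 := h2
    exact (Nat.pow_le_pow_iff_right hp.one_lt).mp this
  have hstep3 : Group.rank W2 ≤ Group.rank H :=
    Group.rank_le_of_surjective (QuotientGroup.mk' (N.subgroupOf H))
      (QuotientGroup.mk'_surjective _)
  omega

lemma key_step {p : ℕ} {G : Type*} [Group G] (n : ℕ)
    (ih : ∀ x ∈ (⊤ : Subgroup G).lowerCentralSeries n, x ^ p ∈ (⊤ : Subgroup G).lowerCentralSeries (n + 1)) :
    ∀ x ∈ (⊤ : Subgroup G).lowerCentralSeries (n + 1), x ^ p ∈ (⊤ : Subgroup G).lowerCentralSeries (n + 2) := by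
  have hlcs : ∀ m : ℕ, (⊤ : Subgroup G).lowerCentralSeries (m + 1) = ⁅(⊤ : Subgroup G).lowerCentralSeries m, ⊤⁆ := fun m => rfl
  set L0 := (⊤ : Subgroup G).lowerCentralSeries n with hL0
  set L1 := (⊤ : Subgroup G).lowerCentralSeries (n + 1) with hL1
  set L2 := (⊤ : Subgroup G).lowerCentralSeries (n + 2) with hL2
  set π := QuotientGroup.mk' L2 with hπ
  have hπ1 : ∀ g : G, π g = 1 ↔ g ∈ L2 := fun g => QuotientGroup.eq_one_iff g
  have hcentral : ∀ a ∈ L1, ∀ b : G, Commute (π a) (π b) := by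
    intro a ha b
    rw [← commutatorElement_eq_one_iff_commute, ← map_commutatorElement]
    rw [hπ1]
    rw [hL2, hlcs (n + 1)]
    exact Subgroup.commutator_mem_commutator ha (Subgroup.mem_top b)
  have hkey : ∀ x ∈ L0, ∀ y : G, ∀ k : ℕ, π ⁅x ^ k, y⁆ = (π ⁅x, y⁆) ^ k := by
    intro x hx y k
    induction k with
    | zero =>
      rw [pow_zero, pow_zero]
      have : ⁅(1 : G), y⁆ = 1 := by rw [commutatorElement_def]; group
      rw [this, map_one]
    | succ k ihk =>
      have hid : ⁅x ^ (k + 1), y⁆ = x * ⁅x ^ k, y⁆ * x⁻¹ * ⁅x, y⁆ := by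
        simp only [commutatorElement_def]
        rw [pow_succ]
        group
      have hmem : ⁅x ^ k, y⁆ ∈ L1 := by
        rw [hL1, hlcs n]
        exact Subgroup.commutator_mem_commutator (pow_mem hx k) (Subgroup.mem_top y)
      have hmem1 : ⁅x, y⁆ ∈ L1 := by
        rw [hL1, hlcs n]
        exact Subgroup.commutator_mem_commutator hx (Subgroup.mem_top y)
      have hcomm := (hcentral _ hmem1 x).symm
      rw [hid, map_mul, map_mul, map_mul, map_inv, ihk]
      rw [show π x * (π ⁅x, y⁆) ^ k * (π x)⁻¹ = (π ⁅x, y⁆) ^ k * (π x * (π x)⁻¹) by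
        rw [(hcomm.pow_right k).eq]; group]
      rw [mul_inv_cancel, mul_one, ← pow_succ]
  set T : Subgroup G :=
    { carrier := {g | g ∈ L1 ∧ g ^ p ∈ L2}
      one_mem' := ⟨Subgroup.one_mem L1, by rw [one_pow]; exact Subgroup.one_mem L2⟩
      mul_mem' := by
        rintro a b ⟨haL, hap⟩ ⟨hbL, hbp⟩
        refine ⟨Subgroup.mul_mem L1 haL hbL, ?_⟩
        rw [← hπ1, map_pow, map_mul]
        rw [(hcentral a haL b).mul_pow]
        rw [← map_pow, ← map_pow, (hπ1 _).mpr hap, (hπ1 _).mpr hbp, one_mul]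
      inv_mem' := by
        rintro a ⟨haL, hap⟩
        refine ⟨Subgroup.inv_mem L1 haL, ?_⟩
        rw [inv_pow]
        exact Subgroup.inv_mem L2 hap } with hT
  have hle : L1 ≤ T := by
    rw [hL1, hlcs n, Subgroup.commutator_le]
    intro x hx y _
    constructor
    · rw [hL1, hlcs n]
      exact Subgroup.commutator_mem_commutator hx (Subgroup.mem_top y)
    · rw [← hπ1, map_pow, ← hkey x hx y p]
      rw [hπ1]
      rw [hL2, hlcs (n + 1)]
      exact Subgroup.commutator_mem_commutator (ih x hx) (Subgroup.mem_top y)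
  exact fun x hx => (hle hx).2

end AuxLemmas

/-- If `G` is `d`-maximal for `A`-subgroups, then every factor `γ_n(G)/γ_{n+1}(G)` of the
lower central series is elementary abelian (here `(⊤ : Subgroup G).lowerCentralSeries n = γ_{n+1}(G)`):
commutators and `p`-th powers of elements of `γ_{n+1}(G)` lie in `γ_{n+2}(G)`. -/
theorem stmt3 {p : ℕ} (hp : p.Prime) {A G : Type*} [Group A] [Group G] [Finite G]
    [MulDistribMulAction A G] (hG : IsPGroup p G) (hmax : DMax A G) :
    ∀ n : ℕ, ∀ x y : G, x ∈ (⊤ : Subgroup G).lowerCentralSeries n → y ∈ (⊤ : Subgroup G).lowerCentralSeries n →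
      ⁅x, y⁆ ∈ (⊤ : Subgroup G).lowerCentralSeries (n + 1) ∧ x ^ p ∈ (⊤ : Subgroup G).lowerCentralSeries (n + 1) := by

  have key : ∀ n : ℕ, ∀ x ∈ (⊤ : Subgroup G).lowerCentralSeries n, x ^ p ∈ (⊤ : Subgroup G).lowerCentralSeries (n + 1) := by
    intro n
    induction n with
    | zero =>
      intro x _
      rw [lowerCentralSeries_one]
      exact base_case hp hG hmax x
    | succ n ih => exact key_step n ih
  intro n x y hx _
  refine ⟨?_, key n x hx⟩
  exact Subgroup.commutator_mem_commutator hx (Subgroup.mem_top y)
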